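/- arXiv:0801.0103 — 3 statements merged into one kernel-verified Lean document; each statement's English description precedes it below -/
import Mathlib

section
/- Let λ > 0, Λ ∈ ℝ, L > 0. Let r : [0,L] → ℝ be continuous and h : [0,L] → ℝ be twice continuously differentiable with h''(t) ≥ λ − r(t) for all t ∈ [0,L]. If ∫₀^t r(s) ds ≤ Λ for every t ∈ [0,L], then h(L) ≥ h(0) + (λ/2)·L² − (|h'(0)| + Λ)·L. -/
open Set MeasureTheory intervalIntegral

/-- If `h'' ≥ λ - r` on `[0, L]` and `∫₀^t r ≤ Λ` for every `t ∈ [0, L]`,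
then `h(L) ≥ h(0) + (λ/2)·L² - (|h'(0)| + Λ)·L`. -/
theorem stmt_1 (lam Λ L : ℝ) (hlam : 0 < lam) (hL : 0 < L)
    (r h h' h'' : ℝ → ℝ)
    (hr : ContinuousOn r (Set.Icc 0 L))
    (hd1 : ∀ t ∈ Set.Icc (0:ℝ) L, HasDerivWithinAt h (h' t) (Set.Icc 0 L) t)
    (hd2 : ∀ t ∈ Set.Icc (0:ℝ) L, HasDerivWithinAt h' (h'' t) (Set.Icc 0 L) t)
    (hc2 : ContinuousOn h'' (Set.Icc 0 L))
    (hbound : ∀ t ∈ Set.Icc (0:ℝ) L, lam - r t ≤ h'' t)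
    (hint : ∀ t ∈ Set.Icc (0:ℝ) L, (∫ s in (0:ℝ)..t, r s) ≤ Λ) :
    h 0 + (lam / 2) * L ^ 2 - (|h' 0| + Λ) * L ≤ h L := by
  have hc1 : ContinuousOn h' (Set.Icc 0 L) := fun t ht => (hd2 t ht).continuousWithinAt
  have hc0 : ContinuousOn h (Set.Icc 0 L) := fun t ht => (hd1 t ht).continuousWithinAt
  -- h' lower bound
  have key : ∀ t ∈ Set.Icc (0:ℝ) L, h' 0 + lam * t - Λ ≤ h' t := by
    intro t ht
    obtain ⟨ht0, htL⟩ := ht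
    have hsub : Set.Icc (0:ℝ) t ⊆ Set.Icc 0 L := Set.Icc_subset_Icc le_rfl htL
    have hftc : (∫ s in (0:ℝ)..t, h'' s) = h' t - h' 0 := by
      apply intervalIntegral.integral_eq_sub_of_hasDeriv_right_of_le ht0
        (hc1.mono hsub)
      · intro x hx
        have hxL : x ∈ Set.Ioo (0:ℝ) L := ⟨hx.1, lt_of_lt_of_le hx.2 htL⟩
        have : HasDerivAt h' (h'' x) x :=
          (hd2 x ⟨hxL.1.le, hxL.2.le⟩).hasDerivAt
            (Icc_mem_nhds hxL.1 hxL.2)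
        exact this.hasDerivWithinAt
      · exact (hc2.mono hsub).intervalIntegrable_of_Icc ht0
    have hmono : (∫ s in (0:ℝ)..t, (lam - r s)) ≤ ∫ s in (0:ℝ)..t, h'' s := by
      apply intervalIntegral.integral_mono_on ht0
      · exact ((continuousOn_const.sub (hr.mono hsub)).intervalIntegrable_of_Icc ht0)
      · exact (hc2.mono hsub).intervalIntegrable_of_Icc ht0
      · intro s hs; exact hbound s (hsub hs)
    have hsplit : (∫ s in (0:ℝ)..t, (lam - r s)) = lam * t - ∫ s in (0:ℝ)..t, r s := by
      rw [intervalIntegral.integral_sub intervalIntegrable_const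
            ((hr.mono hsub).intervalIntegrable_of_Icc ht0),
          intervalIntegral.integral_const]
      simp [smul_eq_mul]; ring
    have hrint := hint t ⟨ht0, htL⟩
    nlinarith [hftc, hmono, hsplit]
  -- integrate again
  have hsubL : Set.Icc (0:ℝ) L ⊆ Set.Icc 0 L := le_rfl
  have hftc2 : (∫ t in (0:ℝ)..L, h' t) = h L - h 0 := by
    apply intervalIntegral.integral_eq_sub_of_hasDeriv_right_of_le hL.le hc0
    · intro x hx
      exact ((hd1 x ⟨hx.1.le, hx.2.le⟩).hasDerivAt (Icc_mem_nhds hx.1 hx.2)).hasDerivWithinAt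
    · exact hc1.intervalIntegrable_of_Icc hL.le
  have hmono2 : (∫ t in (0:ℝ)..L, (h' 0 + lam * t - Λ)) ≤ ∫ t in (0:ℝ)..L, h' t := by
    apply intervalIntegral.integral_mono_on hL.le
    · apply ContinuousOn.intervalIntegrable_of_Icc hL.le
      fun_prop
    · exact hc1.intervalIntegrable_of_Icc hL.le
    · exact key
  have hcomp : (∫ t in (0:ℝ)..L, (h' 0 + lam * t - Λ))
      = (h' 0 - Λ) * L + lam * (L ^ 2 / 2) := by
    have heq : (fun t => h' 0 + lam * t - Λ) = fun t => (h' 0 - Λ) + lam * t := by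
      funext t; ring
    rw [heq, intervalIntegral.integral_add intervalIntegrable_const
        ((Continuous.intervalIntegrable (by fun_prop : Continuous fun t : ℝ => lam * t) 0 L)),
      intervalIntegral.integral_const_mul, integral_id, intervalIntegral.integral_const]
    simp [smul_eq_mul]; ring
  have habs : -|h' 0| ≤ h' 0 := neg_abs_le _
  nlinarith [hftc2, hmono2, hcomp]
end

section
/- Let n ≥ 1 be an integer, K ≥ 0, D ≥ 0, and ρ ≥ 2. Let ψ : [0,ρ] → [0,1] be the piecewise-linear cutoff with ψ(t) = t on [0,1], ψ ≡ 1 on [1, ρ−1], and ψ(t) = ρ−t on [ρ−1, ρ]. Let r : [0,ρ] → ℝ be continuous and h : [0,ρ] → ℝ be twice continuously differentiable such that: (a) r(t) = 1/2 − h''(t) for all t ∈ [ρ−1, ρ]; (b) h'(ρ) = 0; (c) |r(t)| ≤ K for all t ∈ [0,1]; (d) ∫₀^ρ ψ(t)² r(t) dt ≤ 2(n−1); (e) |h(s) − h(t)| ≤ D for all s, t ∈ [ρ−1, ρ]. Then ∫₀^ρ r(t) dt ≤ 2n + K + 2D. -/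
open Set MeasureTheory intervalIntegral

lemma aux_ii {f g : ℝ → ℝ} {a b : ℝ} (hab : a ≤ b) (hg : ContinuousOn g (Icc a b))
    (heq : ∀ x ∈ Icc a b, f x = g x) : IntervalIntegrable f volume a b := by
  rw [intervalIntegrable_iff, uIoc_of_le hab]
  exact ((hg.integrableOn_Icc).mono_set Ioc_subset_Icc_self).congr_fun
    (fun x hx => (heq x (Ioc_subset_Icc_self hx)).symm) measurableSet_Ioc

/-- the real-variable content of Lemma 3.2: with the cutoff `ψ` on `[0, ρ]`,
`r = 1/2 - h''` on `[ρ-1, ρ]`, `h'(ρ) = 0`, `|r| ≤ K` on `[0, 1]`,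
`∫₀^ρ ψ² r ≤ 2(n-1)`, and oscillation of `h` on `[ρ-1, ρ]` at most `D`, we get
`∫₀^ρ r ≤ 2n + K + 2D`. -/
theorem stmt_8 (n : ℕ) (hn : 1 ≤ n) (K D ρ : ℝ) (hK : 0 ≤ K) (hD : 0 ≤ D) (hρ : 2 ≤ ρ)
    (ψ r h h' h'' : ℝ → ℝ)
    (hψmem : ∀ t ∈ Set.Icc (0:ℝ) ρ, ψ t ∈ Set.Icc (0:ℝ) 1)
    (hψ1 : ∀ t ∈ Set.Icc (0:ℝ) 1, ψ t = t)
    (hψ2 : ∀ t ∈ Set.Icc (1:ℝ) (ρ - 1), ψ t = 1)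
    (hψ3 : ∀ t ∈ Set.Icc (ρ - 1) ρ, ψ t = ρ - t)
    (hr : ContinuousOn r (Set.Icc 0 ρ))
    (hd1 : ∀ t ∈ Set.Icc (0:ℝ) ρ, HasDerivWithinAt h (h' t) (Set.Icc 0 ρ) t)
    (hd2 : ∀ t ∈ Set.Icc (0:ℝ) ρ, HasDerivWithinAt h' (h'' t) (Set.Icc 0 ρ) t)
    (hc2 : ContinuousOn h'' (Set.Icc 0 ρ))
    (ha : ∀ t ∈ Set.Icc (ρ - 1) ρ, r t = 1 / 2 - h'' t)
    (hb : h' ρ = 0)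
    (hc : ∀ t ∈ Set.Icc (0:ℝ) 1, |r t| ≤ K)
    (hd : (∫ t in (0:ℝ)..ρ, (ψ t) ^ 2 * r t) ≤ 2 * ((n : ℝ) - 1))
    (he : ∀ s ∈ Set.Icc (ρ - 1) ρ, ∀ t ∈ Set.Icc (ρ - 1) ρ, |h s - h t| ≤ D) :
    (∫ t in (0:ℝ)..ρ, r t) ≤ 2 * (n : ℝ) + K + 2 * D := by
  have h01 : (0:ℝ) ≤ 1 := zero_le_one
  have h1a : (1:ℝ) ≤ ρ - 1 := by linarith
  have h0a : (0:ℝ) ≤ ρ - 1 := by linarith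
  have haρ : ρ - 1 ≤ ρ := by linarith
  have h0ρ : (0:ℝ) ≤ ρ := by linarith
  have hIcc01 : Icc (0:ℝ) 1 ⊆ Icc 0 ρ := Icc_subset_Icc le_rfl (by linarith)
  have hIcc1a : Icc (1:ℝ) (ρ-1) ⊆ Icc 0 ρ := Icc_subset_Icc (by norm_num) haρ
  have hIccaρ : Icc (ρ-1) ρ ⊆ Icc 0 ρ := Icc_subset_Icc h0a le_rfl
  -- continuity of h and h'
  have hch : ContinuousOn h (Icc 0 ρ) := fun t ht => (hd1 t ht).continuousWithinAt
  have hch' : ContinuousOn h' (Icc 0 ρ) := fun t ht => (hd2 t ht).continuousWithinAt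
  -- integrability of r on pieces
  have hri : ∀ a b : ℝ, a ≤ b → Icc a b ⊆ Icc 0 ρ → IntervalIntegrable r volume a b := by
    intro a b hab hsub
    exact aux_ii hab (hr.mono hsub) (fun _ _ => rfl)
  -- integrability of ψ²r on pieces via congr
  have hi1 : IntervalIntegrable (fun t => ψ t ^ 2 * r t) volume 0 1 :=
    aux_ii h01 ((continuousOn_id.pow 2).mul (hr.mono hIcc01))
      (fun x hx => by rw [hψ1 x hx]; simp)
  have hi2 : IntervalIntegrable (fun t => ψ t ^ 2 * r t) volume 1 (ρ-1) :=
    aux_ii h1a (by simpa using (hr.mono hIcc1a))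
      (fun x hx => by rw [hψ2 x hx]; simp)

  have hi3 : IntervalIntegrable (fun t => ψ t ^ 2 * r t) volume (ρ-1) ρ :=
    aux_ii haρ ((((continuousOn_const (c := ρ)).sub continuousOn_id).pow 2).mul (hr.mono hIccaρ))
      (fun x hx => by rw [hψ3 x hx]; simp)
  -- splittings
  have hsplitr : (∫ t in (0:ℝ)..ρ, r t)
      = (∫ t in (0:ℝ)..1, r t) + (∫ t in (1:ℝ)..(ρ-1), r t) + (∫ t in (ρ-1)..ρ, r t) := by
    rw [integral_add_adjacent_intervals (hri 0 1 h01 hIcc01) (hri 1 (ρ-1) h1a hIcc1a),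
      integral_add_adjacent_intervals
        (IntervalIntegrable.trans (hri 0 1 h01 hIcc01) (hri 1 (ρ-1) h1a hIcc1a))
        (hri (ρ-1) ρ haρ hIccaρ)]
  have hsplitψ : (∫ t in (0:ℝ)..ρ, ψ t ^ 2 * r t)
      = (∫ t in (0:ℝ)..1, ψ t ^ 2 * r t) + (∫ t in (1:ℝ)..(ρ-1), ψ t ^ 2 * r t)
        + (∫ t in (ρ-1)..ρ, ψ t ^ 2 * r t) := by
    rw [integral_add_adjacent_intervals hi1 hi2,
      integral_add_adjacent_intervals (hi1.trans hi2) hi3]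
  -- piece 2 : equal
  have hp2 : (∫ t in (1:ℝ)..(ρ-1), r t) = ∫ t in (1:ℝ)..(ρ-1), ψ t ^ 2 * r t := by
    apply integral_congr
    intro x hx
    rw [uIcc_of_le h1a] at hx
    simp [hψ2 x hx]
  -- piece 1 : difference ≤ K
  have hp1 : (∫ t in (0:ℝ)..1, r t) - (∫ t in (0:ℝ)..1, ψ t ^ 2 * r t) ≤ K := by
    rw [← intervalIntegral.integral_sub (hri 0 1 h01 hIcc01) hi1]
    have heq : (∫ t in (0:ℝ)..1, (r t - ψ t ^ 2 * r t))
        = ∫ t in (0:ℝ)..1, (1 - t ^ 2) * r t := by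
      apply integral_congr
      intro x hx
      rw [uIcc_of_le h01] at hx
      have := hψ1 x hx
      dsimp only
      rw [this]; ring
    rw [heq]
    have hb : ‖∫ t in (0:ℝ)..1, (1 - t ^ 2) * r t‖ ≤ K * |1 - 0| := by
      apply intervalIntegral.norm_integral_le_of_norm_le_const
      intro x hx
      rw [uIoc_of_le h01] at hx
      have hx' : x ∈ Icc (0:ℝ) 1 := Ioc_subset_Icc_self hx
      have h1 : 0 ≤ 1 - x ^ 2 := by nlinarith [hx'.1, hx'.2]
      have h2 : 1 - x ^ 2 ≤ 1 := by nlinarith [hx'.1]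
      have := hc x hx'
      rw [Real.norm_eq_abs, abs_mul, abs_of_nonneg h1]
      calc (1 - x ^ 2) * |r x| ≤ 1 * K := by
            apply mul_le_mul h2 this (abs_nonneg _) zero_le_one
        _ = K := one_mul K
    rw [Real.norm_eq_abs] at hb
    calc (∫ t in (0:ℝ)..1, (1 - t ^ 2) * r t) ≤ |∫ t in (0:ℝ)..1, (1 - t ^ 2) * r t| := le_abs_self _
      _ ≤ K * |1 - 0| := hb
      _ = K := by norm_num
  -- piece 3
  have hp3 : (∫ t in (ρ-1)..ρ, r t) - (∫ t in (ρ-1)..ρ, ψ t ^ 2 * r t) ≤ 1/3 + 2 * D := by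
    rw [← intervalIntegral.integral_sub (hri (ρ-1) ρ haρ hIccaρ) hi3]
    have heq : (∫ t in (ρ-1)..ρ, (r t - ψ t ^ 2 * r t))
        = ∫ t in (ρ-1)..ρ, ((1 - (ρ - t) ^ 2) * (1/2 - h'' t)) := by
      apply integral_congr
      intro x hx
      rw [uIcc_of_le haρ] at hx
      have h1 := hψ3 x hx
      have h2 := ha x hx
      dsimp only
      rw [h1, h2]; ring
    rw [heq]
    -- FTC for G
    set G : ℝ → ℝ := fun t => (1 - (ρ - t) ^ 2) * h' t - 2 * (ρ - t) * h t with hG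
    have hftc : (∫ t in (ρ-1)..ρ, ((1 - (ρ - t) ^ 2) * h'' t + 2 * h t)) = G ρ - G (ρ-1) := by
      apply integral_eq_sub_of_hasDeriv_right_of_le haρ
      · apply ContinuousOn.sub
        · exact (((continuousOn_const (c := (1:ℝ))).sub
            (((continuousOn_const (c := ρ)).sub continuousOn_id).pow 2)).mul
            (hch'.mono hIccaρ))
        · exact ((continuousOn_const.mul
            ((continuousOn_const (c := ρ)).sub continuousOn_id)).mul (hch.mono hIccaρ))
      · intro x hx
        have hx0 : 0 < x := by linarith [hx.1]
        have hxρ : x < ρ := hx.2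
        have hnx : Icc (0:ℝ) ρ ∈ nhds x := Icc_mem_nhds hx0 hxρ
        have hxm : x ∈ Icc (0:ℝ) ρ := ⟨le_of_lt hx0, le_of_lt hxρ⟩
        have dh : HasDerivAt h (h' x) x := (hd1 x hxm).hasDerivAt hnx
        have dh' : HasDerivAt h' (h'' x) x := (hd2 x hxm).hasDerivAt hnx
        have du : HasDerivAt (fun t => 1 - (ρ - t) ^ 2) (2 * (ρ - x)) x := by
          have : HasDerivAt (fun t : ℝ => ρ - t) (-1) x := (hasDerivAt_id x).const_sub ρ
          have := (this.pow 2).const_sub (1:ℝ)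
          exact this.congr_deriv (by norm_num)
        have dv : HasDerivAt (fun t => 2 * (ρ - t)) (-2) x := by
          have : HasDerivAt (fun t : ℝ => ρ - t) (-1) x := (hasDerivAt_id x).const_sub ρ
          have := this.const_mul (2:ℝ)
          exact this.congr_deriv (by ring)
        have dG : HasDerivAt G ((1 - (ρ - x) ^ 2) * h'' x + 2 * h x) x := by
          have := (du.mul dh').sub (dv.mul dh)
          exact this.congr_deriv (by ring)
        exact (dG.hasDerivWithinAt)
      · apply aux_ii haρ
          ((((continuousOn_const (c := (1:ℝ))).sub
            (((continuousOn_const (c := ρ)).sub continuousOn_id).pow 2)).mul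
            (hc2.mono hIccaρ)).add (continuousOn_const.mul (hch.mono hIccaρ)))
          (fun _ _ => rfl)
    have hGρ : G ρ = 0 := by simp [hG, hb]
    have hGa : G (ρ-1) = -2 * h (ρ-1) := by
      show (1 - (ρ - (ρ-1)) ^ 2) * h' (ρ-1) - 2 * (ρ - (ρ-1)) * h (ρ-1) = -2 * h (ρ-1)
      rw [show ρ - (ρ-1) = (1:ℝ) by ring]; ring
    -- split integrand
    have hiu : IntervalIntegrable (fun t => (1 - (ρ - t) ^ 2) * h'' t + 2 * h t) volume (ρ-1) ρ := by
      apply aux_ii haρ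
        ((((continuousOn_const (c := (1:ℝ))).sub
          (((continuousOn_const (c := ρ)).sub continuousOn_id).pow 2)).mul
          (hc2.mono hIccaρ)).add (continuousOn_const.mul (hch.mono hIccaρ)))
        (fun _ _ => rfl)
    have hiv : IntervalIntegrable (fun t => (1 - (ρ - t) ^ 2) * (1/2) + 2 * h t) volume (ρ-1) ρ := by
      apply aux_ii haρ
        ((((continuousOn_const (c := (1:ℝ))).sub
          (((continuousOn_const (c := ρ)).sub continuousOn_id).pow 2)).mul
          continuousOn_const).add (continuousOn_const.mul (hch.mono hIccaρ)))
        (fun _ _ => rfl)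
    have hkey : (∫ t in (ρ-1)..ρ, ((1 - (ρ - t) ^ 2) * (1/2 - h'' t)))
        = (∫ t in (ρ-1)..ρ, ((1 - (ρ - t) ^ 2) * (1/2) + 2 * h t))
          - (∫ t in (ρ-1)..ρ, ((1 - (ρ - t) ^ 2) * h'' t + 2 * h t)) := by
      rw [← intervalIntegral.integral_sub hiv hiu]
      apply integral_congr
      intro x _
      ring
    rw [hkey, hftc, hGρ, hGa]
    -- compute ∫ (1 - (ρ-t)^2) * (1/2)
    have hquad : (∫ t in (ρ-1)..ρ, (ρ - t) ^ 2) = 1/3 := by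
      rw [intervalIntegral.integral_comp_sub_left (fun x => x ^ 2) ρ]
      simp only [sub_self, sub_sub_cancel]
      rw [integral_pow]
      norm_num
    have hsplit2 : (∫ t in (ρ-1)..ρ, ((1 - (ρ - t) ^ 2) * (1/2) + 2 * h t))
        = (1/2) * ((ρ - (ρ-1)) - (1/3)) + 2 * ∫ t in (ρ-1)..ρ, h t := by
      have e1 : (∫ t in (ρ-1)..ρ, ((1 - (ρ - t) ^ 2) * (1/2) + 2 * h t))
          = (∫ t in (ρ-1)..ρ, (1 - (ρ - t) ^ 2) * (1/2)) + ∫ t in (ρ-1)..ρ, 2 * h t := by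
        apply intervalIntegral.integral_add
        · exact aux_ii haρ (((continuousOn_const (c := (1:ℝ))).sub
            (((continuousOn_const (c := ρ)).sub continuousOn_id).pow 2)).mul continuousOn_const)
            (fun _ _ => rfl)
        · exact aux_ii haρ (continuousOn_const.mul (hch.mono hIccaρ)) (fun _ _ => rfl)
      rw [e1]
      have e2 : (∫ t in (ρ-1)..ρ, (1 - (ρ - t) ^ 2) * (1/2))
          = (1/2) * ((ρ - (ρ-1)) - 1/3) := by
        have : (∫ t in (ρ-1)..ρ, (1 - (ρ - t) ^ 2) * (1/2))
            = ((∫ t in (ρ-1)..ρ, (1:ℝ)) - ∫ t in (ρ-1)..ρ, (ρ - t)^2) * (1/2) := by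
          rw [← intervalIntegral.integral_sub]
          · rw [← intervalIntegral.integral_mul_const]
          · exact intervalIntegrable_const
          · exact aux_ii haρ ((((continuousOn_const (c := ρ)).sub continuousOn_id).pow 2))
              (fun _ _ => rfl)
        rw [this, hquad]
        have : (∫ t in (ρ-1)..ρ, (1:ℝ)) = ρ - (ρ-1) := by simp
        rw [this]; ring
      rw [e2, intervalIntegral.integral_const_mul]
    rw [hsplit2]
    have hosc : (∫ t in (ρ-1)..ρ, h t) - h (ρ-1) ≤ D := by
      have : (∫ t in (ρ-1)..ρ, h t) - h (ρ-1) = ∫ t in (ρ-1)..ρ, (h t - h (ρ-1)) := by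
        rw [intervalIntegral.integral_sub (aux_ii haρ (hch.mono hIccaρ) (fun _ _ => rfl))
          intervalIntegrable_const]
        simp
      rw [this]
      have hbnd : ‖∫ t in (ρ-1)..ρ, (h t - h (ρ-1))‖ ≤ D * |ρ - (ρ-1)| := by
        apply intervalIntegral.norm_integral_le_of_norm_le_const
        intro x hx
        rw [uIoc_of_le haρ] at hx
        exact he x (Ioc_subset_Icc_self hx) (ρ-1) ⟨le_rfl, haρ⟩
      rw [Real.norm_eq_abs] at hbnd
      have : |ρ - (ρ-1)| = 1 := by norm_num
      rw [this, mul_one] at hbnd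
      calc (∫ t in (ρ-1)..ρ, (h t - h (ρ-1))) ≤ |∫ t in (ρ-1)..ρ, (h t - h (ρ-1))| := le_abs_self _
        _ ≤ D := hbnd
    linarith
  linarith [hsplitr, hsplitψ, hp1, hp2, hp3, hd, (Nat.one_le_cast (α := ℝ)).mpr hn]
end

section
/- Let n ≥ 1 be an integer, C ≥ 0, K ≥ 0, and ρ ≥ 2. Let ψ : [0,ρ] → [0,1] be the piecewise-linear cutoff with ψ(t) = t on [0,1], ψ ≡ 1 on [1, ρ−1], and ψ(t) = ρ−t on [ρ−1, ρ]. Let h : [0,ρ] → ℝ be twice continuously differentiable and set r(t) = 1/2 − h''(t), and suppose: (a) h'(ρ) = 0; (b) |r(t)| ≤ K for all t ∈ [0,1]; (c) ∫₀^ρ ψ(t)² r(t) dt ≤ 2(n−1); (d) h(t) + C ≥ 0 and |h'(t)| ≤ √(h(t) + C) for all t ∈ [ρ−1, ρ]; (e) |h(ρ)| ≤ C. Then ρ ≤ 4n + 2K + 16C + 8 + 2|h'(0)|. -/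
open Set MeasureTheory intervalIntegral Real

lemma ftc_aux {ρ : ℝ} {F F' : ℝ → ℝ}
    (hF : ∀ t ∈ Icc (0:ℝ) ρ, HasDerivWithinAt F (F' t) (Icc 0 ρ) t)
    (hF' : ContinuousOn F' (Icc 0 ρ))
    {a b : ℝ} (h0 : 0 ≤ a) (hab : a ≤ b) (hb : b ≤ ρ) :
    ∫ t in a..b, F' t = F b - F a := by
  have hsub : Icc a b ⊆ Icc 0 ρ := Icc_subset_Icc h0 hb
  apply intervalIntegral.integral_eq_sub_of_hasDeriv_right_of_le hab
  · exact fun t ht => ((hF t (hsub ht)).continuousWithinAt).mono hsub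
  · intro t ht
    have htm : t ∈ Ioo 0 ρ := ⟨lt_of_le_of_lt h0 ht.1, lt_of_lt_of_le ht.2 hb⟩
    exact ((hF t (Ioo_subset_Icc_self htm)).hasDerivAt
      (Icc_mem_nhds htm.1 htm.2)).hasDerivWithinAt
  · exact (hF'.mono (by rw [uIcc_of_le hab]; exact hsub)).intervalIntegrable

lemma ii_congr {f g : ℝ → ℝ} {a b : ℝ} (h : EqOn f g (uIcc a b))
    (hg : IntervalIntegrable g volume a b) : IntervalIntegrable f volume a b := by
  rw [intervalIntegrable_iff] at hg ⊢
  exact hg.congr_fun (fun t ht => (h (uIoc_subset_uIcc ht)).symm) measurableSet_uIoc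

set_option maxHeartbeats 1000000 in
/-- the quantitative core of Theorem 2: with the cutoff `ψ` on `[0, ρ]`,
`r = 1/2 - h''`, `h'(ρ) = 0`, `|r| ≤ K` on `[0, 1]`, `∫₀^ρ ψ² r ≤ 2(n-1)`,
`h + C ≥ 0` and `|h'| ≤ √(h + C)` on `[ρ-1, ρ]`, and `|h(ρ)| ≤ C`, we get
`ρ ≤ 4n + 2K + 16C + 8 + 2|h'(0)|`. -/
theorem stmt_11 (n : ℕ) (hn : 1 ≤ n) (C K ρ : ℝ) (hC : 0 ≤ C) (hK : 0 ≤ K) (hρ : 2 ≤ ρ)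
    (ψ h h' h'' : ℝ → ℝ)
    (hψmem : ∀ t ∈ Set.Icc (0:ℝ) ρ, ψ t ∈ Set.Icc (0:ℝ) 1)
    (hψ1 : ∀ t ∈ Set.Icc (0:ℝ) 1, ψ t = t)
    (hψ2 : ∀ t ∈ Set.Icc (1:ℝ) (ρ - 1), ψ t = 1)
    (hψ3 : ∀ t ∈ Set.Icc (ρ - 1) ρ, ψ t = ρ - t)
    (hd1 : ∀ t ∈ Set.Icc (0:ℝ) ρ, HasDerivWithinAt h (h' t) (Set.Icc 0 ρ) t)
    (hd2 : ∀ t ∈ Set.Icc (0:ℝ) ρ, HasDerivWithinAt h' (h'' t) (Set.Icc 0 ρ) t)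
    (hc2 : ContinuousOn h'' (Set.Icc 0 ρ))
    (ha : h' ρ = 0)
    (hb : ∀ t ∈ Set.Icc (0:ℝ) 1, |1 / 2 - h'' t| ≤ K)
    (hc : (∫ t in (0:ℝ)..ρ, (ψ t) ^ 2 * (1 / 2 - h'' t)) ≤ 2 * ((n : ℝ) - 1))
    (hd : ∀ t ∈ Set.Icc (ρ - 1) ρ,
      0 ≤ h t + C ∧ |h' t| ≤ Real.sqrt (h t + C))
    (he : |h ρ| ≤ C) :
    ρ ≤ 4 * (n : ℝ) + 2 * K + 16 * C + 8 + 2 * |h' 0| := by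
  have hρ1 : (1:ℝ) ≤ ρ - 1 := by linarith
  have hρ0 : (0:ℝ) ≤ ρ - 1 := by linarith
  have hh'cont : ContinuousOn h' (Icc 0 ρ) := fun t ht => (hd2 t ht).continuousWithinAt
  have hhcont : ContinuousOn h (Icc 0 ρ) := fun t ht => (hd1 t ht).continuousWithinAt
  have hrc : ContinuousOn (fun t => 1/2 - h'' t) (Icc 0 ρ) := continuousOn_const.sub hc2
  have int_of : ∀ (f : ℝ → ℝ) (a b : ℝ), 0 ≤ a → a ≤ b → b ≤ ρ →
      ContinuousOn f (Icc 0 ρ) → IntervalIntegrable f volume a b := by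
    intro f a b h0 hab hb' hf
    exact (hf.mono (by rw [uIcc_of_le hab]; exact Icc_subset_Icc h0 hb')).intervalIntegrable
  -- Part 1: pointwise bound |h'| ≤ 3 + C on [ρ-1, ρ]
  have hsub3 : Icc (ρ-1) ρ ⊆ Icc 0 ρ := Icc_subset_Icc hρ0 le_rfl
  obtain ⟨t₀, ht₀, hmax⟩ := isCompact_Icc.exists_isMaxOn (s := Icc (ρ-1) ρ)
      (nonempty_Icc.mpr (by linarith)) (hhcont.mono hsub3)
  have hM0 : 0 ≤ h t₀ + C := (hd t₀ ht₀).1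
  have hs0 : 0 ≤ Real.sqrt (h t₀ + C) := Real.sqrt_nonneg _
  have hptw0 : ∀ t ∈ Icc (ρ-1) ρ, |h' t| ≤ Real.sqrt (h t₀ + C) := by
    intro t ht
    refine (hd t ht).2.trans (Real.sqrt_le_sqrt ?_)
    have h2 : h t ≤ h t₀ := hmax ht
    linarith
  have ht00 : (0:ℝ) ≤ t₀ := le_trans hρ0 ht₀.1
  have hftc0 : ∫ t in t₀..ρ, h' t = h ρ - h t₀ :=
    ftc_aux hd1 hh'cont ht00 ht₀.2 le_rfl
  have hlow : ∫ t in t₀..ρ, (-(Real.sqrt (h t₀ + C))) ≤ ∫ t in t₀..ρ, h' t := by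
    apply intervalIntegral.integral_mono_on ht₀.2 intervalIntegrable_const
      (int_of h' t₀ ρ ht00 ht₀.2 le_rfl hh'cont)
    intro t ht
    have h1 := abs_le.mp (hptw0 t ⟨le_trans ht₀.1 ht.1, ht.2⟩)
    linarith [h1.1]
  rw [intervalIntegral.integral_const, smul_eq_mul, hftc0] at hlow
  have hMle : h t₀ + C ≤ 2*C + Real.sqrt (h t₀ + C) := by
    have h2 : ρ - t₀ ≤ 1 := by linarith [ht₀.1]
    have habs := abs_le.mp he
    nlinarith [mul_le_of_le_one_left hs0 h2]
  have hsle : Real.sqrt (h t₀ + C) ≤ 3 + C := by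
    have hsq := Real.sq_sqrt hM0
    nlinarith [sq_nonneg (Real.sqrt (h t₀ + C) - 3)]
  have hptw : ∀ t ∈ Icc (ρ-1) ρ, |h' t| ≤ 3 + C := fun t ht => (hptw0 t ht).trans hsle
  -- Part 2: splitting the integral
  have cont1 : ContinuousOn (fun t => t^2 * (1/2 - h'' t)) (Icc 0 ρ) :=
    ((continuous_pow 2).continuousOn).mul hrc
  have cont2 : ContinuousOn (fun t => (t^2 - 1) * (1/2 - h'' t)) (Icc 0 ρ) :=
    (((continuous_pow 2).sub continuous_const).continuousOn).mul hrc
  have cont3 : ContinuousOn (fun t => (ρ - t)^2 * (1/2 - h'' t)) (Icc 0 ρ) :=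
    (((continuous_const.sub continuous_id).pow 2).continuousOn).mul hrc
  have i1 : IntervalIntegrable (fun t => ψ t ^ 2 * (1/2 - h'' t)) volume 0 1 := by
    refine ii_congr (g := fun t => t^2 * (1/2 - h'' t)) ?_
      (int_of _ 0 1 le_rfl zero_le_one (by linarith) cont1)
    intro t ht
    rw [uIcc_of_le zero_le_one] at ht
    simp only [hψ1 t ht]
  have i2 : IntervalIntegrable (fun t => ψ t ^ 2 * (1/2 - h'' t)) volume 1 (ρ-1) := by
    refine ii_congr (g := fun t => 1/2 - h'' t) ?_
      (int_of _ 1 (ρ-1) (by linarith) hρ1 (by linarith) hrc)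
    intro t ht
    rw [uIcc_of_le hρ1] at ht
    simp [hψ2 t ht]
  have i3 : IntervalIntegrable (fun t => ψ t ^ 2 * (1/2 - h'' t)) volume (ρ-1) ρ := by
    refine ii_congr (g := fun t => (ρ - t)^2 * (1/2 - h'' t)) ?_
      (int_of _ (ρ-1) ρ hρ0 (by linarith) le_rfl cont3)
    intro t ht
    rw [uIcc_of_le (by linarith : ρ - 1 ≤ ρ)] at ht
    simp only [hψ3 t ht]
  have hsplit1 := intervalIntegral.integral_add_adjacent_intervals i1 i2
  have hsplit2 := intervalIntegral.integral_add_adjacent_intervals (i1.trans i2) i3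
  have e1 : (∫ t in (0:ℝ)..1, ψ t ^ 2 * (1/2 - h'' t))
      = ∫ t in (0:ℝ)..1, t^2 * (1/2 - h'' t) := by
    refine intervalIntegral.integral_congr fun t ht => ?_
    rw [uIcc_of_le zero_le_one] at ht
    rw [hψ1 t ht]
  have e2 : (∫ t in (1:ℝ)..(ρ-1), ψ t ^ 2 * (1/2 - h'' t))
      = ∫ t in (1:ℝ)..(ρ-1), (1/2 - h'' t) := by
    refine intervalIntegral.integral_congr fun t ht => ?_
    rw [uIcc_of_le hρ1] at ht
    simp [hψ2 t ht]
  have e3 : (∫ t in (ρ-1)..ρ, ψ t ^ 2 * (1/2 - h'' t))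
      = ∫ t in (ρ-1)..ρ, (ρ - t)^2 * (1/2 - h'' t) := by
    refine intervalIntegral.integral_congr fun t ht => ?_
    rw [uIcc_of_le (by linarith : ρ - 1 ≤ ρ)] at ht
    rw [hψ3 t ht]
  have hcc : (∫ t in (0:ℝ)..1, t^2 * (1/2 - h'' t))
      + (∫ t in (1:ℝ)..(ρ-1), (1/2 - h'' t))
      + (∫ t in (ρ-1)..ρ, (ρ - t)^2 * (1/2 - h'' t)) ≤ 2 * ((n:ℝ) - 1) := by
    rw [← e1, ← e2, ← e3, hsplit1, hsplit2]
    exact hc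
  -- Part 3: values of the pieces
  have cA : Continuous fun t : ℝ => -(2*(ρ - t)) :=
    (continuous_const.mul (continuous_const.sub continuous_id)).neg
  have cB : Continuous fun t : ℝ => (ρ - t)^2 := (continuous_const.sub continuous_id).pow 2
  have cK : Continuous fun t : ℝ => (-K) * (1 - t^2) :=
    continuous_const.mul (continuous_const.sub (continuous_pow 2))
  have V0 : (∫ t in (0:ℝ)..1, (1/2 - h'' t)) = 1/2 - (h' 1 - h' 0) := by
    rw [intervalIntegral.integral_sub intervalIntegrable_const
      (int_of h'' 0 1 le_rfl zero_le_one (by linarith) hc2),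
      ftc_aux hd2 hc2 le_rfl zero_le_one (by linarith),
      intervalIntegral.integral_const, smul_eq_mul]
    ring
  have V2 : (∫ t in (1:ℝ)..(ρ-1), (1/2 - h'' t)) = (ρ-2) * (1/2) - (h' (ρ-1) - h' 1) := by
    rw [intervalIntegral.integral_sub intervalIntegrable_const
      (int_of h'' 1 (ρ-1) (by linarith) hρ1 (by linarith) hc2),
      ftc_aux hd2 hc2 (by linarith) hρ1 (by linarith),
      intervalIntegral.integral_const, smul_eq_mul]
    ring
  have hsplitA : (∫ t in (0:ℝ)..1, t^2 * (1/2 - h'' t))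
      = (∫ t in (0:ℝ)..1, (t^2 - 1) * (1/2 - h'' t)) + ∫ t in (0:ℝ)..1, (1/2 - h'' t) := by
    rw [← intervalIntegral.integral_add
      (int_of _ 0 1 le_rfl zero_le_one (by linarith) cont2)
      (int_of _ 0 1 le_rfl zero_le_one (by linarith) hrc)]
    exact intervalIntegral.integral_congr fun t ht => by ring
  have B1 : (∫ t in (0:ℝ)..1, (-K) * (1 - t^2))
      ≤ ∫ t in (0:ℝ)..1, (t^2 - 1) * (1/2 - h'' t) := by
    apply intervalIntegral.integral_mono_on zero_le_one
      (cK.intervalIntegrable 0 1)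
      (int_of _ 0 1 le_rfl zero_le_one (by linarith) cont2)
    intro t ht
    have h1 := (abs_le.mp (hb t ht)).2
    have hsq : t^2 ≤ 1 := by nlinarith [ht.1, ht.2]
    have hq : (0:ℝ) ≤ (1 - t^2) * (K - (1/2 - h'' t)) :=
      mul_nonneg (by linarith) (by linarith)
    have key : (t^2 - 1) * (1/2 - h'' t) - (-K) * (1 - t^2)
        = (1 - t^2) * (K - (1/2 - h'' t)) := by ring
    linarith [hq, key]
  have C1 : (∫ t in (0:ℝ)..1, (-K) * (1 - t^2)) = -(2/3 * K) := by
    have hprim : ∀ t : ℝ, HasDerivAt (fun s => (-K) * (s - s^3/3)) ((-K) * (1 - t^2)) t := by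
      intro t
      have := ((hasDerivAt_id t).sub (((hasDerivAt_id t).pow 3).div_const 3)).const_mul (-K)
      refine this.congr_deriv ?_
      simp only [id_eq]
      push_cast
      ring
    rw [intervalIntegral.integral_eq_sub_of_hasDerivAt (fun t _ => hprim t)
      (cK.intervalIntegrable 0 1)]
    norm_num
    ring
  -- Part 4: integration by parts on [ρ-1, ρ]
  have hF : ∀ t ∈ Icc (0:ℝ) ρ, HasDerivWithinAt (fun s => (ρ - s)^2 * h' s)
      ((-(2*(ρ - t))) * h' t + (ρ - t)^2 * h'' t) (Icc 0 ρ) t := by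
    intro t ht
    have hp : HasDerivAt (fun s : ℝ => (ρ - s)^2) (-(2*(ρ - t))) t := by
      have := ((hasDerivAt_id t).const_sub ρ).pow 2
      refine this.congr_deriv ?_
      simp only [id_eq]
      push_cast
      ring
    exact (hp.hasDerivWithinAt).mul (hd2 t ht)
  have hF'c : ContinuousOn (fun t => (-(2*(ρ - t))) * h' t + (ρ - t)^2 * h'' t) (Icc 0 ρ) :=
    (cA.continuousOn.mul hh'cont).add (cB.continuousOn.mul hc2)
  have VF : (∫ t in (ρ-1)..ρ, ((-(2*(ρ - t))) * h' t + (ρ - t)^2 * h'' t))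
      = -(h' (ρ-1)) := by
    rw [ftc_aux hF hF'c hρ0 (by linarith) le_rfl]
    have h1 : ρ - (ρ - 1) = (1:ℝ) := by ring
    simp [ha, h1]
  have hIsplit : (∫ t in (ρ-1)..ρ, ((-(2*(ρ - t))) * h' t + (ρ - t)^2 * h'' t))
      = (∫ t in (ρ-1)..ρ, (-(2*(ρ - t))) * h' t) + ∫ t in (ρ-1)..ρ, (ρ - t)^2 * h'' t := by
    exact intervalIntegral.integral_add
      (int_of _ (ρ-1) ρ hρ0 (by linarith) le_rfl (cA.continuousOn.mul hh'cont))
      (int_of _ (ρ-1) ρ hρ0 (by linarith) le_rfl (cB.continuousOn.mul hc2))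
  have V3 : (∫ t in (ρ-1)..ρ, (ρ - t)^2 * (1/2 - h'' t))
      = (∫ t in (ρ-1)..ρ, (ρ - t)^2 * (1/2)) - ∫ t in (ρ-1)..ρ, (ρ - t)^2 * h'' t := by
    rw [← intervalIntegral.integral_sub
      (int_of (fun t => (ρ - t)^2 * (1/2)) (ρ-1) ρ hρ0 (by linarith) le_rfl (cB.continuousOn.mul continuousOn_const))
      (int_of (fun t => (ρ - t)^2 * h'' t) (ρ-1) ρ hρ0 (by linarith) le_rfl (cB.continuousOn.mul hc2))]
    exact intervalIntegral.integral_congr fun t ht => by ring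
  have c2 : (∫ t in (ρ-1)..ρ, (ρ - t)^2 * (1/2)) = 1/6 := by
    have hprim : ∀ t : ℝ, HasDerivAt (fun s => -(1/6) * (ρ - s)^3) ((ρ - t)^2 * (1/2)) t := by
      intro t
      have := (((hasDerivAt_id t).const_sub ρ).pow 3).const_mul (-(1/6) : ℝ)
      refine this.congr_deriv ?_
      simp only [id_eq]
      push_cast
      ring
    rw [intervalIntegral.integral_eq_sub_of_hasDerivAt (fun t _ => hprim t)
      ((cB.mul continuous_const).intervalIntegrable (ρ-1) ρ)]
    have h1 : ρ - (ρ - 1) = (1:ℝ) := by ring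
    have h2 : ρ - ρ = (0:ℝ) := by ring
    rw [h1, h2]
    norm_num
  have LB : (∫ t in (ρ-1)..ρ, (-(2*(ρ - t))) * (3 + C))
      ≤ ∫ t in (ρ-1)..ρ, (-(2*(ρ - t))) * h' t := by
    apply intervalIntegral.integral_mono_on (by linarith)
      ((cA.mul continuous_const).intervalIntegrable (ρ-1) ρ)
      (int_of _ (ρ-1) ρ hρ0 (by linarith) le_rfl (cA.continuousOn.mul hh'cont))
    intro t ht
    have h1 := (abs_le.mp (hptw t ht)).2
    have hq : (0:ℝ) ≤ (ρ - t) * (3 + C - h' t) :=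
      mul_nonneg (by linarith [ht.2]) (by linarith)
    have key : (-(2*(ρ - t))) * h' t - (-(2*(ρ - t))) * (3 + C)
        = 2 * ((ρ - t) * (3 + C - h' t)) := by ring
    show (-(2*(ρ - t))) * (3 + C) ≤ (-(2*(ρ - t))) * h' t
    linarith [hq, key]
  have c3 : (∫ t in (ρ-1)..ρ, (-(2*(ρ - t))) * (3 + C)) = -(3 + C) := by
    have hprim : ∀ t : ℝ, HasDerivAt (fun s => (3 + C) * (ρ - s)^2) ((-(2*(ρ - t))) * (3 + C)) t := by
      intro t
      have := (((hasDerivAt_id t).const_sub ρ).pow 2).const_mul (3 + C)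
      refine this.congr_deriv ?_
      simp only [id_eq]
      push_cast
      ring
    rw [intervalIntegral.integral_eq_sub_of_hasDerivAt (fun t _ => hprim t)
      ((cA.mul continuous_const).intervalIntegrable (ρ-1) ρ)]
    have h1 : ρ - (ρ - 1) = (1:ℝ) := by ring
    have h2 : ρ - ρ = (0:ℝ) := by ring
    rw [h1, h2]
    ring
  -- Final assembly
  have hn' : (1:ℝ) ≤ (n:ℝ) := by exact_mod_cast hn
  have habs0 : -|h' 0| ≤ h' 0 := neg_abs_le _
  linarith [hcc, hsplitA, V0, V2, V3, c2, VF, hIsplit, B1, C1, LB, c3]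
end
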